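/- Polynomial bound on sums of squared matrix coefficients: Let Γ be a group with length function |·|, π a unitary representation of Γ on a Hilbert space H, 1 ∈ H a fixed unit vector with φ(γ) = ⟨π(γ)1, 1⟩ > 0. Assume: (a) there exist constants and a degree-one polynomial Q₂ with φ(γ) ≤ Q₂(n) e^{−αn/2} for γ with |γ| near n (n large); (b) the Cauchy–Schwarz bound ⟨π(γ)1, ξ⟩² ≤ φ(γ) ⟨π(γ)1, ξ²⟩-type bound holds in the form ⟨π(γ)1, ξ⟩²/φ(γ)² ≤ (P₀ξ²)(γx); (c) e^{−αk} ≤ C'/|C_{k,ρ}| for the annuli C_{k,ρ}; and (d) the uniform bound (1/|C_{k,ρ}|)|Σ_{γ∈C_{k,ρ}} P₀(f)(γx)| ≤ M‖f‖₁. Then there is a polynomial Q of degree 3 such that for every unit vector ξ and all n: Σ_{|γ| ≤ n} |⟨π(γ)1, ξ⟩|² ≤ Q(n). -/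

import Mathlib

open Finset

lemma sum_biUnion_le_aux {ι β : Type*} [DecidableEq β] (s : Finset ι) (t : ι → Finset β)
    (f : β → ℝ) (hf : ∀ x, 0 ≤ f x) :
    ∑ x ∈ s.biUnion t, f x ≤ ∑ i ∈ s, ∑ x ∈ t i, f x := by
  classical
  induction s using Finset.induction with
  | empty => simp
  | insert a s h ih =>
    rw [Finset.biUnion_insert, Finset.sum_insert h]
    have h1 : ∑ x ∈ t a ∪ s.biUnion t, f x + ∑ x ∈ t a ∩ s.biUnion t, f x
        = ∑ x ∈ t a, f x + ∑ x ∈ s.biUnion t, f x := Finset.sum_union_inter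
    have h2 : 0 ≤ ∑ x ∈ t a ∩ s.biUnion t, f x := Finset.sum_nonneg fun x _ => hf x
    linarith

/-- polynomial bound on sums of squared matrix coefficients:
under (a) the upper Harish-Chandra estimate on annuli, (b) the Cauchy–Schwarz
bound via the normalized Poisson transform `T γ ξ = (P₀ξ²)(γx)`, (c) the
comparison `e^{−αk} ≤ C'/|C_{k,ρ}|`, and (d) the uniform averaged bound, there is
a polynomial `Q` of degree 3 with `Σ_{|γ|≤n} ⟨π(γ)1, ξ⟩² ≤ Q(n)` for every unit
vector `ξ`. -/
theorem stmt15 {G H : Type*} [Group G]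
    [NormedAddCommGroup H] [InnerProductSpace ℝ H]
    -- unitary representation and distinguished unit vector
    (π : G →* (H ≃ₗᵢ[ℝ] H)) (one : H) (hone : ‖one‖ = 1)
    -- length function `|γ| = d(x, γx)`
    (ℓ : G → ℝ) (hℓ : ∀ γ, 0 ≤ ℓ γ)
    -- Harish-Chandra function, positive
    (φ : G → ℝ) (hφdef : ∀ γ, φ γ = inner ℝ (π γ one) one) (hφpos : ∀ γ, 0 < φ γ)
    (α ρ C' M : ℝ) (hα : 0 < α) (hρ : 1 ≤ ρ) (hC' : 0 < C') (hM : 0 < M)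
    -- balls and annuli of `Γ` are finite
    (Γn : ℕ → Finset G) (hΓn : ∀ (n : ℕ) (γ : G), γ ∈ Γn n ↔ ℓ γ ≤ n)
    (Ck : ℕ → Finset G)
    (hCk : ∀ (k : ℕ) (γ : G), γ ∈ Ck k ↔ (k : ℝ) - ρ ≤ ℓ γ ∧ ℓ γ ≤ (k : ℝ) + ρ)
    (N₀ : ℕ)
    -- (a) upper Harish-Chandra estimate on annuli, degree-one polynomial `a·n+b`
    (a b : ℝ) (ha : 0 < a) (hb : 0 < b)
    (hHC : ∀ n : ℕ, N₀ ≤ n → ∀ γ ∈ Ck n,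
      φ γ ≤ (a * n + b) * Real.exp (-α * n / 2))
    -- (b) Cauchy–Schwarz bound via the normalized Poisson transform along the orbit
    (T : G → H → ℝ)
    (hT : ∀ (γ : G) (ξ : H),
      (inner ℝ (π γ one) ξ : ℝ) ^ 2 / (φ γ) ^ 2 ≤ T γ ξ)
    -- (c) comparison of `e^{−αk}` with the cardinality of the annuli
    (hcard : ∀ k : ℕ, N₀ ≤ k →
      Real.exp (-α * k) ≤ C' / ((Ck k).card : ℝ))
    -- (d) uniform averaged bound
    (hunif : ∀ (k : ℕ), N₀ ≤ k → ∀ ξ : H,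
      ((Ck k).card : ℝ)⁻¹ * ∑ γ ∈ Ck k, T γ ξ ≤ M * ‖ξ‖ ^ 2) :
    ∃ q₃ q₂ q₁ q₀ : ℝ, ∀ ξ : H, ‖ξ‖ = 1 → ∀ n : ℕ,
      ∑ γ ∈ Γn n, (inner ℝ (π γ one) ξ : ℝ) ^ 2
        ≤ q₃ * n ^ 3 + q₂ * n ^ 2 + q₁ * n + q₀ := by
  classical
  set D : ℝ := ∑ k ∈ Finset.range N₀, ((Ck k).card : ℝ) with hD
  have hD0 : 0 ≤ D := Finset.sum_nonneg fun k _ => Nat.cast_nonneg _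
  refine ⟨C' * M * a ^ 2, C' * M * (a ^ 2 + 2 * a * b), C' * M * (2 * a * b + b ^ 2),
    C' * M * b ^ 2 + D, ?_⟩
  intro ξ hξ n
  set f : G → ℝ := fun γ => (inner ℝ (π γ one) ξ : ℝ) ^ 2 with hf
  have hfnn : ∀ γ, 0 ≤ f γ := fun γ => sq_nonneg _
  -- each term is at most 1
  have hf1 : ∀ γ, f γ ≤ 1 := by
    intro γ
    have hn : ‖π γ one‖ = 1 := by rw [(π γ).norm_map]; exact hone
    have := abs_real_inner_le_norm (π γ one) ξ
    rw [hn, hξ, one_mul] at this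
    calc f γ = |(inner ℝ (π γ one) ξ : ℝ)| ^ 2 := by rw [sq_abs]
      _ ≤ 1 ^ 2 := by exact pow_le_pow_left₀ (abs_nonneg _) this 2
      _ = 1 := one_pow 2
  -- T is nonnegative
  have hTnn : ∀ γ, 0 ≤ T γ ξ := fun γ =>
    le_trans (div_nonneg (sq_nonneg _) (sq_nonneg _)) (hT γ ξ)
  have hanb : (0:ℝ) ≤ a * n + b := by positivity
  have hB0 : (0:ℝ) ≤ C' * M * (a * n + b) ^ 2 := by positivity
  -- the ball is covered by the annuli
  have hsub : Γn n ⊆ (Finset.range (n + 1)).biUnion Ck := by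
    intro γ hγ
    rw [hΓn] at hγ
    refine Finset.mem_biUnion.2 ⟨⌈ℓ γ⌉₊, Finset.mem_range.2 (Nat.lt_succ_of_le
      (Nat.ceil_le.2 hγ)), (hCk _ _).2 ⟨?_, ?_⟩⟩
    · have h1 : (⌈ℓ γ⌉₊ : ℝ) < ℓ γ + 1 := Nat.ceil_lt_add_one (hℓ γ)
      linarith
    · have := Nat.le_ceil (ℓ γ); linarith
  have step1 : ∑ γ ∈ Γn n, f γ ≤ ∑ k ∈ Finset.range (n + 1), ∑ γ ∈ Ck k, f γ :=
    le_trans (Finset.sum_le_sum_of_subset_of_nonneg hsub fun γ _ _ => hfnn γ)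
      (sum_biUnion_le_aux _ _ _ hfnn)
  -- bound on each annulus for large k
  have key : ∀ k, N₀ ≤ k → k ≤ n → ∑ γ ∈ Ck k, f γ ≤ C' * M * (a * n + b) ^ 2 := by
    intro k hN hkn
    by_cases hc : (Ck k).card = 0
    · rw [Finset.card_eq_zero.1 hc]; simpa using hB0
    have hcpos : (0:ℝ) < ((Ck k).card : ℝ) := by positivity
    have hank : (0:ℝ) ≤ a * k + b := by positivity
    -- pointwise bound on the annulus
    have hpt : ∀ γ ∈ Ck k, f γ ≤ (a * k + b) ^ 2 * Real.exp (-α * k) * T γ ξ := by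
      intro γ hγ
      have hφ2 : φ γ ^ 2 ≤ (a * k + b) ^ 2 * Real.exp (-α * k) := by
        have h1 : φ γ ^ 2 ≤ ((a * k + b) * Real.exp (-α * k / 2)) ^ 2 :=
          pow_le_pow_left₀ (hφpos γ).le (hHC k hN γ hγ) 2
        have h2 : ((a * k + b) * Real.exp (-α * k / 2)) ^ 2
            = (a * k + b) ^ 2 * Real.exp (-α * k) := by
          rw [mul_pow, sq (Real.exp _), ← Real.exp_add]
          congr 2; ring
        linarith [h1, h2.le]
      have h3 : f γ ≤ T γ ξ * φ γ ^ 2 :=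
        (div_le_iff₀ (pow_pos (hφpos γ) 2)).1 (hT γ ξ)
      calc f γ ≤ T γ ξ * φ γ ^ 2 := h3
        _ ≤ T γ ξ * ((a * k + b) ^ 2 * Real.exp (-α * k)) :=
            mul_le_mul_of_nonneg_left hφ2 (hTnn γ)
        _ = (a * k + b) ^ 2 * Real.exp (-α * k) * T γ ξ := by ring
    have hsumT : ∑ γ ∈ Ck k, T γ ξ ≤ M * ((Ck k).card : ℝ) := by
      have := hunif k hN ξ
      rw [hξ] at this
      have h4 : ((Ck k).card : ℝ)⁻¹ * ∑ γ ∈ Ck k, T γ ξ ≤ M := by simpa using this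
      calc ∑ γ ∈ Ck k, T γ ξ
          = ((Ck k).card : ℝ) * (((Ck k).card : ℝ)⁻¹ * ∑ γ ∈ Ck k, T γ ξ) := by
            field_simp
        _ ≤ ((Ck k).card : ℝ) * M := mul_le_mul_of_nonneg_left h4 hcpos.le
        _ = M * ((Ck k).card : ℝ) := mul_comm _ _
    have hEC : Real.exp (-α * k) * ((Ck k).card : ℝ) ≤ C' := by
      have := hcard k hN
      rw [le_div_iff₀ hcpos] at this
      exact this
    have hE0 : (0:ℝ) ≤ (a * k + b) ^ 2 * Real.exp (-α * k) := by positivity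
    calc ∑ γ ∈ Ck k, f γ
        ≤ ∑ γ ∈ Ck k, (a * k + b) ^ 2 * Real.exp (-α * k) * T γ ξ :=
          Finset.sum_le_sum hpt
      _ = (a * k + b) ^ 2 * Real.exp (-α * k) * ∑ γ ∈ Ck k, T γ ξ := by
          rw [Finset.mul_sum]
      _ ≤ (a * k + b) ^ 2 * Real.exp (-α * k) * (M * ((Ck k).card : ℝ)) :=
          mul_le_mul_of_nonneg_left hsumT hE0
      _ = (a * k + b) ^ 2 * M * (Real.exp (-α * k) * ((Ck k).card : ℝ)) := by ring
      _ ≤ (a * k + b) ^ 2 * M * C' := by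
          apply mul_le_mul_of_nonneg_left hEC; positivity
      _ ≤ (a * n + b) ^ 2 * M * C' := by
          have hkn' : (k : ℝ) ≤ (n : ℝ) := by exact_mod_cast hkn
          have h5 : a * k + b ≤ a * n + b := by nlinarith
          have h6 : (a * k + b) ^ 2 ≤ (a * n + b) ^ 2 :=
            pow_le_pow_left₀ hank h5 2
          exact mul_le_mul_of_nonneg_right
            (mul_le_mul_of_nonneg_right h6 hM.le) hC'.le
      _ = C' * M * (a * n + b) ^ 2 := by ring
  -- split the sum over annuli
  have split : ∑ k ∈ Finset.range (n + 1), ∑ γ ∈ Ck k, f γ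
      ≤ D + (n + 1 : ℝ) * (C' * M * (a * n + b) ^ 2) := by
    rw [← Finset.sum_filter_add_sum_filter_not (Finset.range (n + 1)) (· < N₀)]
    have part1 : ∑ k ∈ (Finset.range (n + 1)).filter (· < N₀), ∑ γ ∈ Ck k, f γ ≤ D := by
      calc ∑ k ∈ (Finset.range (n + 1)).filter (· < N₀), ∑ γ ∈ Ck k, f γ
          ≤ ∑ k ∈ (Finset.range (n + 1)).filter (· < N₀), ((Ck k).card : ℝ) := by
            apply Finset.sum_le_sum
            intro k _
            calc ∑ γ ∈ Ck k, f γ ≤ ∑ γ ∈ Ck k, 1 :=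
                Finset.sum_le_sum fun γ _ => hf1 γ
              _ = ((Ck k).card : ℝ) := by simp
        _ ≤ D := by
            apply Finset.sum_le_sum_of_subset_of_nonneg
            · intro k hk
              simp only [Finset.mem_filter] at hk
              exact Finset.mem_range.2 hk.2
            · intro k _ _; exact Nat.cast_nonneg _
    have part2 : ∑ k ∈ (Finset.range (n + 1)).filter (fun k => ¬ k < N₀), ∑ γ ∈ Ck k, f γ
        ≤ (n + 1 : ℝ) * (C' * M * (a * n + b) ^ 2) := by
      calc ∑ k ∈ (Finset.range (n + 1)).filter (fun k => ¬ k < N₀), ∑ γ ∈ Ck k, f γ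
          ≤ ∑ _k ∈ (Finset.range (n + 1)).filter (fun k => ¬ k < N₀),
              C' * M * (a * n + b) ^ 2 := by
            apply Finset.sum_le_sum
            intro k hk
            simp only [Finset.mem_filter, Finset.mem_range, not_lt] at hk
            exact key k hk.2 (Nat.lt_succ_iff.1 hk.1)
        _ = (((Finset.range (n + 1)).filter (fun k => ¬ k < N₀)).card : ℝ)
              * (C' * M * (a * n + b) ^ 2) := by rw [Finset.sum_const, nsmul_eq_mul]
        _ ≤ (n + 1 : ℝ) * (C' * M * (a * n + b) ^ 2) := by
            apply mul_le_mul_of_nonneg_right _ hB0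
            have := Finset.card_filter_le (Finset.range (n + 1)) (fun k => ¬ k < N₀)
            rw [Finset.card_range] at this
            exact_mod_cast this
    linarith
  have final : D + (n + 1 : ℝ) * (C' * M * (a * n + b) ^ 2)
      = C' * M * a ^ 2 * n ^ 3 + C' * M * (a ^ 2 + 2 * a * b) * n ^ 2
        + C' * M * (2 * a * b + b ^ 2) * n + (C' * M * b ^ 2 + D) := by ring
  calc ∑ γ ∈ Γn n, f γ ≤ ∑ k ∈ Finset.range (n + 1), ∑ γ ∈ Ck k, f γ := step1
    _ ≤ D + (n + 1 : ℝ) * (C' * M * (a * n + b) ^ 2) := split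
    _ = _ := final
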